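/- Let X be a compact metric space, f : X → X a homeomorphism, and A : X → GL(d,ℝ) continuous, generating the cocycle 𝒜ⁿ_x. Suppose z ∈ X has dense two-sided orbit {fⁿz : n ∈ ℤ}, and there is a constant c such that ‖𝒜ⁿ_z‖ ≤ c and ‖(𝒜ⁿ_z)^{−1}‖ ≤ c for all n ∈ ℤ. Then ‖𝒜ⁿ_x‖ ≤ c² and ‖(𝒜ⁿ_x)^{−1}‖ ≤ c² for all x ∈ X and n ∈ ℤ. -/

import Mathlib

open scoped MatrixGroups Matrix.Norms.L2Operator

/-- The `GL(d,ℝ)`-valued cocycle generated by `A` over a bijection `f`: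
`𝒜⁰_x = I` and `𝒜ⁿ⁺¹_x = A(fⁿx) · 𝒜ⁿ_x`. -/
def cocN {X : Type*} {d : ℕ} (f : Equiv.Perm X) (A : X → GL (Fin d) ℝ) :
    X → ℕ → GL (Fin d) ℝ
  | _, 0 => 1
  | x, n + 1 => A ((f ^ n) x) * cocN f A x n

/-- The extension of the cocycle to `ℤ`: `𝒜⁻ⁿ_x = (𝒜ⁿ_{f⁻ⁿx})⁻¹`. -/
def cocZ {X : Type*} {d : ℕ} (f : Equiv.Perm X) (A : X → GL (Fin d) ℝ)
    (x : X) (n : ℤ) : GL (Fin d) ℝ :=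
  if 0 ≤ n then cocN f A x n.toNat else (cocN f A ((f ^ n) x) (-n).toNat)⁻¹

section aux
variable {X : Type*} {d : ℕ} (f : Equiv.Perm X) (A : X → GL (Fin d) ℝ)

lemma cocZ_natCast (x : X) (n : ℕ) : cocZ f A x (n : ℤ) = cocN f A x n := by
  rw [cocZ, if_pos (Int.natCast_nonneg _), Int.toNat_natCast]

lemma cocZ_negSucc (x : X) (k : ℕ) :
    cocZ f A x (Int.negSucc k) = (cocN f A ((f ^ (Int.negSucc k)) x) (k + 1))⁻¹ := by
  have h : ¬ (0 ≤ Int.negSucc k) := not_le.mpr (Int.negSucc_lt_zero k)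
  rw [cocZ, if_neg h]
  congr 1

lemma cocN_succ' (x : X) (n : ℕ) :
    cocN f A x (n + 1) = cocN f A (f x) n * A x := by
  induction n generalizing x with
  | zero => simp [cocN]
  | succ n ih =>
    have h : (f ^ (n + 1)) x = (f ^ n) (f x) := by
      rw [pow_succ, Equiv.Perm.mul_apply]
    show A ((f ^ (n+1)) x) * cocN f A x (n+1) = A ((f ^ n) (f x)) * cocN f A (f x) n * A x
    rw [h, ih, mul_assoc]

lemma cocZ_succ (x : X) (n : ℤ) :
    cocZ f A x (n + 1) = A ((f ^ n) x) * cocZ f A x n := by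
  rcases n with k | k
  · show cocZ f A x ((k : ℤ) + 1) = A ((f ^ (k:ℤ)) x) * cocZ f A x (k : ℤ)
    have h1 : ((k : ℤ) + 1) = ((k + 1 : ℕ) : ℤ) := by push_cast; ring
    rw [h1, cocZ_natCast, cocZ_natCast]
    show A ((f ^ k) x) * cocN f A x k = A ((f ^ (k : ℤ)) x) * cocN f A x k
    rw [zpow_natCast]
  · rcases k with _ | j
    · show cocZ f A x 0 = A ((f ^ (-1 : ℤ)) x) * cocZ f A x (-1)
      have h3 : cocZ f A x (-1 : ℤ) = (cocN f A ((f ^ (-1 : ℤ)) x) 1)⁻¹ :=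
        cocZ_negSucc f A x 0
      rw [h3]
      have h2 : cocN f A ((f ^ (-1 : ℤ)) x) 1 = A ((f ^ (-1 : ℤ)) x) := by
        show A ((f ^ 0) ((f ^ (-1:ℤ)) x)) * 1 = _
        simp
      rw [h2]
      show cocZ f A x ((0:ℕ) : ℤ) = _
      rw [cocZ_natCast]
      simp [cocN]
    · have e1 : (Int.negSucc (j+1)) + 1 = Int.negSucc j := by
        simp [Int.negSucc_eq]
      rw [e1, cocZ_negSucc, cocZ_negSucc]
      have key : cocN f A ((f ^ (Int.negSucc (j+1))) x) (j+1+1)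
          = cocN f A ((f ^ (Int.negSucc j)) x) (j+1) * A ((f ^ (Int.negSucc (j+1))) x) := by
        have e2 : (1 : ℤ) + Int.negSucc (j+1) = Int.negSucc j := by
          simp [Int.negSucc_eq]
        have h5 : f ((f ^ (Int.negSucc (j+1))) x) = (f ^ (Int.negSucc j)) x := by
          rw [← e2, zpow_add, zpow_one, Equiv.Perm.mul_apply]
        rw [cocN_succ' f A _ (j+1), h5]
      rw [key, mul_inv_rev, ← mul_assoc, mul_inv_cancel, one_mul]

lemma cocZ_add (x : X) (m : ℤ) :
    ∀ n : ℤ, cocZ f A x (n + m) = cocZ f A ((f ^ m) x) n * cocZ f A x m := by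
  intro n
  induction n using Int.induction_on with
  | zero =>
    have h0 : cocZ f A ((f ^ m) x) (0 : ℤ) = 1 := by
      rw [show (0:ℤ) = ((0:ℕ):ℤ) from rfl, cocZ_natCast]; rfl
    rw [zero_add, h0, one_mul]
  | succ n ih =>
    have e : (n : ℤ) + 1 + m = (n + m) + 1 := by ring
    have hpt : (f ^ ((n:ℤ) + m)) x = (f ^ (n:ℤ)) ((f ^ m) x) := by
      rw [zpow_add, Equiv.Perm.mul_apply]
    rw [e, cocZ_succ, ih, cocZ_succ, mul_assoc, hpt]
  | pred n ih =>
    have s1 := cocZ_succ f A x (-(n:ℤ) - 1 + m)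
    have s2 := cocZ_succ f A ((f ^ m) x) (-(n:ℤ) - 1)
    have e1 : -(n:ℤ) - 1 + m + 1 = -n + m := by ring
    have e2 : -(n:ℤ) - 1 + 1 = -n := by ring
    rw [e1] at s1
    rw [e2] at s2
    have hpt : (f ^ (-(n:ℤ) - 1)) ((f ^ m) x) = (f ^ (-(n:ℤ) - 1 + m)) x := by
      rw [zpow_add, Equiv.Perm.mul_apply]
    rw [hpt] at s2
    rw [ih, s2, mul_assoc] at s1
    exact (mul_left_cancel s1).symm
end aux

section cont
variable {X : Type*} [TopologicalSpace X] {d : ℕ} (f : Equiv.Perm X) (A : X → GL (Fin d) ℝ)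

lemma cont_perm_pow {g : Equiv.Perm X} (hg : Continuous g) (n : ℕ) :
    Continuous fun x => (g ^ n) x := by
  induction n with
  | zero => simpa using continuous_id'
  | succ n ih =>
    have h : (fun x => (g ^ (n+1)) x) = fun x => (g ^ n) (g x) := by
      funext x; rw [pow_succ, Equiv.Perm.mul_apply]
    rw [h]; exact ih.comp hg

lemma cont_perm_zpow (hf : Continuous f) (hf' : Continuous f.symm) (n : ℤ) :
    Continuous fun x => (f ^ n) x := by
  have hinv : Continuous (f⁻¹ : Equiv.Perm X) := by
    have : ((f⁻¹ : Equiv.Perm X) : X → X) = f.symm := rfl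
    rw [this]; exact hf'
  rcases n with k | k
  · have h : (fun x => (f ^ (Int.ofNat k)) x) = fun x => (f ^ k) x := by
      funext x
      rw [Int.ofNat_eq_natCast, zpow_natCast]
    rw [h]; exact cont_perm_pow hf k
  · have h : (fun x => (f ^ (Int.negSucc k)) x) = fun x => ((f⁻¹) ^ (k+1)) x := by
      funext x
      rw [zpow_negSucc, inv_pow]
    rw [h]; exact cont_perm_pow hinv (k+1)

variable (hf : Continuous f) (hf' : Continuous f.symm)
  (hA : Continuous fun x => (A x : Matrix (Fin d) (Fin d) ℝ))

include hA in
lemma contAinv : Continuous fun x => (((A x)⁻¹ : GL (Fin d) ℝ) : Matrix (Fin d) (Fin d) ℝ) := by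
  have h : (fun x => (((A x)⁻¹ : GL (Fin d) ℝ) : Matrix (Fin d) (Fin d) ℝ))
      = fun x => Ring.inverse ((A x : Matrix (Fin d) (Fin d) ℝ)) := by
    funext x; exact (Ring.inverse_unit (A x)).symm
  rw [h, show (fun x => Ring.inverse ((A x : Matrix (Fin d) (Fin d) ℝ)))
      = Ring.inverse ∘ (fun x => (A x : Matrix (Fin d) (Fin d) ℝ)) from rfl]
  exact continuous_iff_continuousAt.mpr fun x =>
    ContinuousAt.comp (NormedRing.inverse_continuousAt (A x)) hA.continuousAt

include hf hA in
lemma contN (n : ℕ) :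
    Continuous fun x => ((cocN f A x n : GL (Fin d) ℝ) : Matrix (Fin d) (Fin d) ℝ) := by
  induction n with
  | zero => exact continuous_const
  | succ n ih =>
    have h : (fun x => ((cocN f A x (n+1) : GL (Fin d) ℝ) : Matrix (Fin d) (Fin d) ℝ))
        = fun x => ((A ((f ^ n) x) : Matrix (Fin d) (Fin d) ℝ)
            * ((cocN f A x n : GL (Fin d) ℝ) : Matrix (Fin d) (Fin d) ℝ)) := by
      funext x; rfl
    rw [h]
    exact (hA.comp (cont_perm_pow hf n)).mul ih

include hf hA in
lemma contNinv (n : ℕ) :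
    Continuous fun x => (((cocN f A x n)⁻¹ : GL (Fin d) ℝ) : Matrix (Fin d) (Fin d) ℝ) := by
  induction n with
  | zero => simp only [cocN, inv_one]; exact continuous_const
  | succ n ih =>
    have h : (fun x => (((cocN f A x (n+1))⁻¹ : GL (Fin d) ℝ) : Matrix (Fin d) (Fin d) ℝ))
        = fun x => ((((cocN f A x n)⁻¹ : GL (Fin d) ℝ) : Matrix (Fin d) (Fin d) ℝ)
            * (((A ((f ^ n) x))⁻¹ : GL (Fin d) ℝ) : Matrix (Fin d) (Fin d) ℝ)) := by
      funext x
      show (((A ((f ^ n) x) * cocN f A x n)⁻¹ : GL (Fin d) ℝ) : Matrix (Fin d) (Fin d) ℝ) = _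
      rw [mul_inv_rev, Units.val_mul]
    rw [h]
    exact ih.mul ((contAinv A hA).comp (cont_perm_pow hf n))

include hf hf' hA in
lemma contZ (n : ℤ) :
    Continuous fun x => ((cocZ f A x n : GL (Fin d) ℝ) : Matrix (Fin d) (Fin d) ℝ) := by
  rcases n with k | k
  · have h : (fun x => ((cocZ f A x (Int.ofNat k) : GL (Fin d) ℝ) : Matrix (Fin d) (Fin d) ℝ))
        = fun x => ((cocN f A x k : GL (Fin d) ℝ) : Matrix (Fin d) (Fin d) ℝ) := by
      funext x; rw [Int.ofNat_eq_natCast, cocZ_natCast]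
    rw [h]; exact contN f A hf hA k
  · have h : (fun x => ((cocZ f A x (Int.negSucc k) : GL (Fin d) ℝ) : Matrix (Fin d) (Fin d) ℝ))
        = fun x => (((cocN f A ((f ^ (Int.negSucc k)) x) (k+1))⁻¹ : GL (Fin d) ℝ) :
            Matrix (Fin d) (Fin d) ℝ) := by
      funext x; rw [cocZ_negSucc]
    rw [h]
    exact (contNinv f A hf hA (k+1)).comp (cont_perm_zpow f hf hf' (Int.negSucc k))

include hf hf' hA in
lemma contZinv (n : ℤ) :
    Continuous fun x => (((cocZ f A x n)⁻¹ : GL (Fin d) ℝ) : Matrix (Fin d) (Fin d) ℝ) := by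
  rcases n with k | k
  · have h : (fun x => (((cocZ f A x (Int.ofNat k))⁻¹ : GL (Fin d) ℝ) : Matrix (Fin d) (Fin d) ℝ))
        = fun x => (((cocN f A x k)⁻¹ : GL (Fin d) ℝ) : Matrix (Fin d) (Fin d) ℝ) := by
      funext x; rw [Int.ofNat_eq_natCast, cocZ_natCast]
    rw [h]; exact contNinv f A hf hA k
  · have h : (fun x => (((cocZ f A x (Int.negSucc k))⁻¹ : GL (Fin d) ℝ) : Matrix (Fin d) (Fin d) ℝ))
        = fun x => ((cocN f A ((f ^ (Int.negSucc k)) x) (k+1) : GL (Fin d) ℝ) :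
            Matrix (Fin d) (Fin d) ℝ) := by
      funext x; rw [cocZ_negSucc, inv_inv]
    rw [h]
    exact (contN f A hf hA (k+1)).comp (cont_perm_zpow f hf hf' (Int.negSucc k))
end cont


/-- If a continuous `GL(d,ℝ)`-valued cocycle over a homeomorphism of a compact metric
space is bounded by `c` along a dense two-sided orbit, then it is bounded by `c²`
everywhere. -/
theorem stmt_12 {X : Type*} [MetricSpace X] [CompactSpace X] (d : ℕ)
    (f : Equiv.Perm X) (hf : Continuous f) (hf' : Continuous f.symm)
    (A : X → GL (Fin d) ℝ)
    (hA : Continuous fun x => (A x : Matrix (Fin d) (Fin d) ℝ))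
    (z : X) (hdense : Dense (Set.range fun n : ℤ => (f ^ n) z))
    (c : ℝ)
    (hz : ∀ n : ℤ, ‖(cocZ f A z n : Matrix (Fin d) (Fin d) ℝ)‖ ≤ c ∧
      ‖(((cocZ f A z n)⁻¹ : GL (Fin d) ℝ) : Matrix (Fin d) (Fin d) ℝ)‖ ≤ c) :
    ∀ x : X, ∀ n : ℤ, ‖(cocZ f A x n : Matrix (Fin d) (Fin d) ℝ)‖ ≤ c ^ 2 ∧
      ‖(((cocZ f A x n)⁻¹ : GL (Fin d) ℝ) : Matrix (Fin d) (Fin d) ℝ)‖ ≤ c ^ 2 := by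
  intro x n
  have hc : 0 ≤ c := le_trans (norm_nonneg _) (hz 0).1
  set S : Set X := {y : X | ‖(cocZ f A y n : Matrix (Fin d) (Fin d) ℝ)‖ ≤ c ^ 2 ∧
      ‖(((cocZ f A y n)⁻¹ : GL (Fin d) ℝ) : Matrix (Fin d) (Fin d) ℝ)‖ ≤ c ^ 2} with hS
  have horb : ∀ m : ℤ, (f ^ m) z ∈ S := by
    intro m
    have key : cocZ f A ((f ^ m) z) n = cocZ f A z (n + m) * (cocZ f A z m)⁻¹ :=
      eq_mul_inv_iff_mul_eq.mpr (cocZ_add f A z m n).symm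
    constructor
    · rw [key, Units.val_mul]
      refine le_trans (norm_mul_le _ _) ?_
      rw [sq]
      exact mul_le_mul (hz (n + m)).1 (hz m).2 (norm_nonneg _) hc
    · rw [key, mul_inv_rev, inv_inv, Units.val_mul]
      refine le_trans (norm_mul_le _ _) ?_
      rw [sq]
      exact mul_le_mul (hz m).1 (hz (n + m)).2 (norm_nonneg _) hc
  have hcl : IsClosed S := by
    rw [hS, Set.setOf_and]
    exact IsClosed.inter
      (isClosed_le (Continuous.norm (contZ f A hf hf' hA n)) continuous_const)
      (isClosed_le (Continuous.norm (contZinv f A hf hf' hA n)) continuous_const)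
  have hsub : Set.range (fun m : ℤ => (f ^ m) z) ⊆ S := by
    rintro _ ⟨m, rfl⟩; exact horb m
  exact hcl.closure_subset (closure_mono hsub (hdense x))
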